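/- (Three-point lemma.) Let (A, ρ_A) be a separable metric space, let 𝔠 be a convex subset of the space P(A) of Borel probability measures on A, let h : 𝔠 → ℝ be convex with flat derivative δh/δm, let ν ∈ 𝔠, and let G : 𝔠 → ℝ be convex with flat derivative δG/δm. Suppose m̄ ∈ 𝔠 minimises m ↦ G(m) + D_h(m|ν) over 𝔠. Then for all m' ∈ 𝔠: G(m') + D_h(m'|ν) ≥ G(m̄) + D_h(m'|m̄) + D_h(m̄|ν). -/

import Mathlib

open MeasureTheory Filter Topology

/-- The convex combination `m + ε (m' − m) = (1−ε)·m + ε·m'` of two measures. -/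
noncomputable def comb {A : Type*} [MeasurableSpace A] (ε : ℝ) (m m' : Measure A) : Measure A :=
  ENNReal.ofReal (1 - ε) • m + ENNReal.ofReal ε • m'

/-- The integral `∫ φ d(m' − m) := ∫ φ dm' − ∫ φ dm`. -/
noncomputable def intDiff {A : Type*} [MeasurableSpace A] (φ : A → ℝ) (m' m : Measure A) : ℝ :=
  (∫ a, φ a ∂m') - ∫ a, φ a ∂m

/-- The Bregman divergence `D_h(m'|m)` associated with `h` and its flat derivative `D`. -/
noncomputable def bregman {A : Type*} [MeasurableSpace A] (h : Measure A → ℝ)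
    (D : Measure A → A → ℝ) (m' m : Measure A) : ℝ :=
  h m' - h m - intDiff (D m) m' m


lemma integral_comb {A : Type*} [MeasurableSpace A] (φ : A → ℝ) (m m' : Measure A)
    (ε : ℝ) (hε0 : 0 ≤ ε) (hε1 : ε ≤ 1)
    (h1 : MeasureTheory.Integrable φ m) (h2 : MeasureTheory.Integrable φ m') :
    ∫ a, φ a ∂(comb ε m m') = (1 - ε) * ∫ a, φ a ∂m + ε * ∫ a, φ a ∂m' := by
  rw [comb, MeasureTheory.integral_add_measure
      (h1.smul_measure ENNReal.ofReal_ne_top) (h2.smul_measure ENNReal.ofReal_ne_top),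
    MeasureTheory.integral_smul_measure, MeasureTheory.integral_smul_measure,
    ENNReal.toReal_ofReal (by linarith), ENNReal.toReal_ofReal hε0, smul_eq_mul, smul_eq_mul]

/-- Three-point lemma: if `m̄` minimises `m ↦ G(m) + D_h(m|ν)` over `𝔠`, then
`G(m') + D_h(m'|ν) ≥ G(m̄) + D_h(m'|m̄) + D_h(m̄|ν)` for all `m' ∈ 𝔠`. -/
theorem stmt6 {A : Type*} [MetricSpace A] [TopologicalSpace.SeparableSpace A]
    [MeasurableSpace A] [BorelSpace A]
    (C : Set (Measure A))
    (hprob : ∀ m ∈ C, IsProbabilityMeasure m)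
    (hCconv : ∀ m ∈ C, ∀ m' ∈ C, ∀ ε ∈ Set.Icc (0 : ℝ) 1, comb ε m m' ∈ C)
    (h : Measure A → ℝ)
    (hconv : ∀ m ∈ C, ∀ m' ∈ C, ∀ ε ∈ Set.Icc (0 : ℝ) 1,
      h (comb ε m m') ≤ (1 - ε) * h m + ε * h m')
    (Dh : Measure A → A → ℝ)
    (hmeas : Measurable (Function.uncurry Dh))
    (hint : ∀ m ∈ C, ∀ m' ∈ C, Integrable (Dh m) m')
    (hlim : ∀ m ∈ C, ∀ m' ∈ C,
      Tendsto (fun ε : ℝ => (h (comb ε m m') - h m) / ε) (𝓝[>] (0 : ℝ))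
        (𝓝 (intDiff (Dh m) m' m)))
    (hzero : ∀ m ∈ C, ∫ a, Dh m a ∂m = 0)
    (G : Measure A → ℝ)
    (Gconv : ∀ m ∈ C, ∀ m' ∈ C, ∀ ε ∈ Set.Icc (0 : ℝ) 1,
      G (comb ε m m') ≤ (1 - ε) * G m + ε * G m')
    (DG : Measure A → A → ℝ)
    (Gmeas : Measurable (Function.uncurry DG))
    (Gint : ∀ m ∈ C, ∀ m' ∈ C, Integrable (DG m) m')
    (Glim : ∀ m ∈ C, ∀ m' ∈ C,
      Tendsto (fun ε : ℝ => (G (comb ε m m') - G m) / ε) (𝓝[>] (0 : ℝ))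
        (𝓝 (intDiff (DG m) m' m)))
    (Gzero : ∀ m ∈ C, ∫ a, DG m a ∂m = 0)
    (ν : Measure A) (hν : ν ∈ C)
    (mbar : Measure A) (hmbar : mbar ∈ C)
    (hmin : ∀ m ∈ C, G mbar + bregman h Dh mbar ν ≤ G m + bregman h Dh m ν) :
    ∀ m' ∈ C,
      G mbar + bregman h Dh m' mbar + bregman h Dh mbar ν ≤
        G m' + bregman h Dh m' ν := by
  intro m' hm'
  have hIoc : Set.Ioc (0:ℝ) 1 ∈ 𝓝[>] (0:ℝ) :=
    Ioc_mem_nhdsGT_of_mem (by norm_num : (0:ℝ) ∈ Set.Ico (0:ℝ) 1)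
  set a := intDiff (DG mbar) m' mbar with ha
  set b := intDiff (Dh mbar) m' mbar with hb
  set c := intDiff (Dh ν) m' mbar with hc
  have h1 : a ≤ G m' - G mbar := by
    refine le_of_tendsto (Glim mbar hmbar m' hm') ?_
    filter_upwards [hIoc] with ε hε
    obtain ⟨hε0, hε1⟩ := hε
    rw [div_le_iff₀ hε0]
    have := Gconv mbar hmbar m' hm' ε ⟨le_of_lt hε0, hε1⟩
    nlinarith
  have h2 : 0 ≤ a + b - c := by
    have tend : Tendsto (fun ε : ℝ =>
        (G (comb ε mbar m') - G mbar) / ε + (h (comb ε mbar m') - h mbar) / ε - c)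
        (𝓝[>] (0:ℝ)) (𝓝 (a + b - c)) :=
      ((Glim mbar hmbar m' hm').add (hlim mbar hmbar m' hm')).sub tendsto_const_nhds
    refine ge_of_tendsto tend ?_
    filter_upwards [hIoc] with ε hε
    obtain ⟨hε0, hε1⟩ := hε
    have hcomb : comb ε mbar m' ∈ C := hCconv mbar hmbar m' hm' ε ⟨le_of_lt hε0, hε1⟩
    have hmin' := hmin (comb ε mbar m') hcomb
    have hIc : ∫ x, Dh ν x ∂(comb ε mbar m') =
        (1 - ε) * ∫ x, Dh ν x ∂mbar + ε * ∫ x, Dh ν x ∂m' :=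
      integral_comb _ _ _ ε (le_of_lt hε0) hε1 (hint ν hν mbar hmbar) (hint ν hν m' hm')
    simp only [bregman, intDiff] at hmin' hc ⊢
    have key : c * ε ≤ (G (comb ε mbar m') - G mbar) + (h (comb ε mbar m') - h mbar) := by
      rw [hc]; nlinarith
    rw [← add_div, sub_nonneg, le_div_iff₀ hε0]
    linarith
  simp only [bregman, intDiff] at ha hb hc ⊢
  linarith
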